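/- Let λ, μ ∈ ℝ with λ ≠ μ and λ ≠ −μ, Γ = (λ+μ)/(λ−μ), and let f₀, k_x, k_y, γ₁, γ₂ be reals satisfying the dispersion relation k_x·k_y = Γ²·sinh²γ₁ − Γ⁻²·sinh²γ₂. Set f(x,y,n₁,n₂) = f₀ + k_x·x + k_y·y + γ₁·n₁ + γ₂·n₂. Then the one-soliton function u(x,y,n₁,n₂) = φ(x,y,n₁,n₂) + ln(1 + e^{2f(x,y,n₁,n₂)}) satisfies the (2+2)-dimensional Toda lattice equation: for all x,y ∈ ℝ and n₁,n₂ ∈ ℤ, the mixed second partial derivative ∂²u/∂x∂y equals exp(Δ₁u) − exp(Δ₂u). -/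

import Mathlib

noncomputable section

/-- The background `φ(x,y,n₁,n₂)`. -/
def solPhi (lam mu : ℝ) (x y : ℝ) (n₁ n₂ : ℤ) : ℝ :=
  8 * x * y * (lam * mu * (lam ^ 2 + mu ^ 2) / (lam ^ 2 - mu ^ 2) ^ 2) +
    ((n₁ : ℝ) ^ 2 - (n₂ : ℝ) ^ 2) * Real.log |(lam + mu) / (lam - mu)|

/-- The linear phase `f(x,y,n₁,n₂) = f₀ + kₓx + k_y y + γ₁n₁ + γ₂n₂`. -/
def solF (f₀ kx ky γ₁ γ₂ : ℝ) (x y : ℝ) (n₁ n₂ : ℤ) : ℝ :=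
  f₀ + kx * x + ky * y + γ₁ * (n₁ : ℝ) + γ₂ * (n₂ : ℝ)

/-- The one-soliton function `u = φ + ln(1 + e^{2f})`. -/
def solU (lam mu f₀ kx ky γ₁ γ₂ : ℝ) (x y : ℝ) (n₁ n₂ : ℤ) : ℝ :=
  solPhi lam mu x y n₁ n₂ +
    Real.log (1 + Real.exp (2 * solF f₀ kx ky γ₁ γ₂ x y n₁ n₂))

lemma inner_deriv' (lam mu f₀ kx ky γ₁ γ₂ x y : ℝ) (n₁ n₂ : ℤ) :
    deriv (fun y' => solU lam mu f₀ kx ky γ₁ γ₂ x y' n₁ n₂) y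
      = 8 * x * (lam * mu * (lam ^ 2 + mu ^ 2) / (lam ^ 2 - mu ^ 2) ^ 2)
        + 2 * ky * (Real.exp (2 * solF f₀ kx ky γ₁ γ₂ x y n₁ n₂) /
          (1 + Real.exp (2 * solF f₀ kx ky γ₁ γ₂ x y n₁ n₂))) := by
  have hf : HasDerivAt (fun y' => solF f₀ kx ky γ₁ γ₂ x y' n₁ n₂) ky y := by
    unfold solF
    simpa using ((((hasDerivAt_id y).const_mul ky).const_add
      (f₀ + kx * x)).add_const (γ₁ * (n₁ : ℝ))).add_const (γ₂ * (n₂ : ℝ))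
  have hE : HasDerivAt (fun y' => Real.exp (2 * solF f₀ kx ky γ₁ γ₂ x y' n₁ n₂))
      (Real.exp (2 * solF f₀ kx ky γ₁ γ₂ x y n₁ n₂) * (2 * ky)) y :=
    (hf.const_mul 2).exp
  have hpos : (0:ℝ) < 1 + Real.exp (2 * solF f₀ kx ky γ₁ γ₂ x y n₁ n₂) := by positivity
  have hlog : HasDerivAt (fun y' => Real.log (1 + Real.exp (2 * solF f₀ kx ky γ₁ γ₂ x y' n₁ n₂)))
      ((Real.exp (2 * solF f₀ kx ky γ₁ γ₂ x y n₁ n₂) * (2 * ky)) /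
        (1 + Real.exp (2 * solF f₀ kx ky γ₁ γ₂ x y n₁ n₂))) y :=
    (hE.const_add 1).log (ne_of_gt hpos)
  have hphi : HasDerivAt (fun y' => solPhi lam mu x y' n₁ n₂)
      (8 * x * (lam * mu * (lam ^ 2 + mu ^ 2) / (lam ^ 2 - mu ^ 2) ^ 2)) y := by
    have heq : (fun y' => solPhi lam mu x y' n₁ n₂)
        = fun y' => (8 * x * (lam * mu * (lam ^ 2 + mu ^ 2) / (lam ^ 2 - mu ^ 2) ^ 2)) * y'
          + ((n₁ : ℝ) ^ 2 - (n₂ : ℝ) ^ 2) * Real.log |(lam + mu) / (lam - mu)| := by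
      funext y'; unfold solPhi; ring
    rw [heq]
    simpa using ((hasDerivAt_id y).const_mul
      (8 * x * (lam * mu * (lam ^ 2 + mu ^ 2) / (lam ^ 2 - mu ^ 2) ^ 2))).add_const
      (((n₁ : ℝ) ^ 2 - (n₂ : ℝ) ^ 2) * Real.log |(lam + mu) / (lam - mu)|)
  have := (hphi.add hlog).deriv
  rw [show (fun y' => solU lam mu f₀ kx ky γ₁ γ₂ x y' n₁ n₂)
      = fun y' => solPhi lam mu x y' n₁ n₂ +
        Real.log (1 + Real.exp (2 * solF f₀ kx ky γ₁ γ₂ x y' n₁ n₂)) from rfl]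
  refine this.trans ?_; ring

set_option maxHeartbeats 1000000 in
theorem one_soliton_solves_toda22
    (lam mu : ℝ) (h1 : lam ≠ mu) (h2 : lam ≠ -mu)
    (f₀ kx ky γ₁ γ₂ : ℝ)
    (hdisp : kx * ky =
      ((lam + mu) / (lam - mu)) ^ 2 * Real.sinh γ₁ ^ 2 -
        ((lam + mu) / (lam - mu)) ^ (-2 : ℤ) * Real.sinh γ₂ ^ 2) :
    ∀ (x y : ℝ) (n₁ n₂ : ℤ),
      deriv (fun x' => deriv (fun y' => solU lam mu f₀ kx ky γ₁ γ₂ x' y' n₁ n₂) y) x =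
        Real.exp (solU lam mu f₀ kx ky γ₁ γ₂ x y (n₁ + 1) n₂ -
            2 * solU lam mu f₀ kx ky γ₁ γ₂ x y n₁ n₂ +
            solU lam mu f₀ kx ky γ₁ γ₂ x y (n₁ - 1) n₂) -
          Real.exp (solU lam mu f₀ kx ky γ₁ γ₂ x y n₁ (n₂ + 1) -
            2 * solU lam mu f₀ kx ky γ₁ γ₂ x y n₁ n₂ +
            solU lam mu f₀ kx ky γ₁ γ₂ x y n₁ (n₂ - 1)) := by
  intro x y n₁ n₂
  have hlm : lam - mu ≠ 0 := sub_ne_zero.mpr h1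
  have hlp : lam + mu ≠ 0 := by
    intro h; apply h2; linarith
  have hd : lam ^ 2 - mu ^ 2 ≠ 0 := by
    have h := mul_ne_zero hlm hlp
    rwa [show (lam - mu) * (lam + mu) = lam ^ 2 - mu ^ 2 by ring] at h
  set Γ : ℝ := (lam + mu) / (lam - mu) with hΓdef
  have hΓ : Γ ≠ 0 := div_ne_zero hlp hlm
  set C : ℝ := lam * mu * (lam ^ 2 + mu ^ 2) / (lam ^ 2 - mu ^ 2) ^ 2 with hCdef
  set E : ℝ := Real.exp (2 * solF f₀ kx ky γ₁ γ₂ x y n₁ n₂) with hEdef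
  have hEpos : (0:ℝ) < E := Real.exp_pos _
  have hE1 : (0:ℝ) < 1 + E := by positivity
  set s1 : ℝ := Real.exp γ₁ with hs1def
  set s2 : ℝ := Real.exp γ₂ with hs2def
  have hs1 : s1 ≠ 0 := Real.exp_ne_zero _
  have hs2 : s2 ≠ 0 := Real.exp_ne_zero _
  -- outer derivative
  have hfx : HasDerivAt (fun x' => solF f₀ kx ky γ₁ γ₂ x' y n₁ n₂) kx x := by
    unfold solF
    simpa using (((((hasDerivAt_id x).const_mul kx).const_add f₀).add_const
      (ky * y)).add_const (γ₁ * (n₁ : ℝ))).add_const (γ₂ * (n₂ : ℝ))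
  have hEx : HasDerivAt (fun x' => Real.exp (2 * solF f₀ kx ky γ₁ γ₂ x' y n₁ n₂))
      (E * (2 * kx)) x := (hfx.const_mul 2).exp
  have hq : HasDerivAt (fun x' => Real.exp (2 * solF f₀ kx ky γ₁ γ₂ x' y n₁ n₂) /
      (1 + Real.exp (2 * solF f₀ kx ky γ₁ γ₂ x' y n₁ n₂)))
      ((E * (2 * kx) * (1 + E) - E * (E * (2 * kx))) / (1 + E) ^ 2) x :=
    hEx.div (hEx.const_add 1) (ne_of_gt hE1)
  have hfun : (fun x' => deriv (fun y' => solU lam mu f₀ kx ky γ₁ γ₂ x' y' n₁ n₂) y)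
      = fun x' => (8 * C) * x' + (2 * ky) *
          (Real.exp (2 * solF f₀ kx ky γ₁ γ₂ x' y n₁ n₂) /
            (1 + Real.exp (2 * solF f₀ kx ky γ₁ γ₂ x' y n₁ n₂))) := by
    funext x'; rw [inner_deriv']; ring
  have hAll : HasDerivAt (fun x' => (8 * C) * x' + (2 * ky) *
      (Real.exp (2 * solF f₀ kx ky γ₁ γ₂ x' y n₁ n₂) /
        (1 + Real.exp (2 * solF f₀ kx ky γ₁ γ₂ x' y n₁ n₂))))
      (8 * C + 4 * (kx * ky) * (E / (1 + E) ^ 2)) x := by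
    have h := ((hasDerivAt_id x).const_mul (8 * C)).add (hq.const_mul (2 * ky))
    refine h.congr_deriv ?_
    ring
  rw [hfun, hAll.deriv]
  -- now the RHS
  have ha : Real.exp (2 * solF f₀ kx ky γ₁ γ₂ x y (n₁ + 1) n₂) = E * (s1 * s1) := by
    rw [hEdef, hs1def, ← Real.exp_add, ← Real.exp_add]
    congr 1; unfold solF; push_cast; ring
  have hb : Real.exp (2 * solF f₀ kx ky γ₁ γ₂ x y (n₁ - 1) n₂) = E * (s1⁻¹ * s1⁻¹) := by
    rw [hEdef, hs1def, ← Real.exp_neg, ← Real.exp_add, ← Real.exp_add]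
    congr 1; unfold solF; push_cast; ring
  have hc : Real.exp (2 * solF f₀ kx ky γ₁ γ₂ x y n₁ (n₂ + 1)) = E * (s2 * s2) := by
    rw [hEdef, hs2def, ← Real.exp_add, ← Real.exp_add]
    congr 1; unfold solF; push_cast; ring
  have hd2 : Real.exp (2 * solF f₀ kx ky γ₁ γ₂ x y n₁ (n₂ - 1)) = E * (s2⁻¹ * s2⁻¹) := by
    rw [hEdef, hs2def, ← Real.exp_neg, ← Real.exp_add, ← Real.exp_add]
    congr 1; unfold solF; push_cast; ring
  set t : ℝ := Real.log |Γ| with htdef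
  have hΓabs : (0:ℝ) < |Γ| := abs_pos.mpr hΓ
  have h2t : Real.exp (t + t) = Γ * Γ := by
    rw [Real.exp_add, htdef, Real.exp_log hΓabs, abs_mul_abs_self]
  have hp1pos : (0:ℝ) < 1 + E * (s1 * s1) := by positivity
  have hr1pos : (0:ℝ) < 1 + E * (s1⁻¹ * s1⁻¹) := by positivity
  have hp2pos : (0:ℝ) < 1 + E * (s2 * s2) := by positivity
  have hr2pos : (0:ℝ) < 1 + E * (s2⁻¹ * s2⁻¹) := by positivity
  have e1 : solU lam mu f₀ kx ky γ₁ γ₂ x y (n₁ + 1) n₂ -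
      2 * solU lam mu f₀ kx ky γ₁ γ₂ x y n₁ n₂ +
      solU lam mu f₀ kx ky γ₁ γ₂ x y (n₁ - 1) n₂
      = (t + t) + (Real.log (1 + E * (s1 * s1)) + Real.log (1 + E * (s1⁻¹ * s1⁻¹)))
        - (Real.log (1 + E) + Real.log (1 + E)) := by
    unfold solU solPhi
    rw [ha, hb, ← hEdef, ← htdef]
    push_cast; ring
  have e2 : solU lam mu f₀ kx ky γ₁ γ₂ x y n₁ (n₂ + 1) -
      2 * solU lam mu f₀ kx ky γ₁ γ₂ x y n₁ n₂ +
      solU lam mu f₀ kx ky γ₁ γ₂ x y n₁ (n₂ - 1)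
      = (Real.log (1 + E * (s2 * s2)) + Real.log (1 + E * (s2⁻¹ * s2⁻¹)))
        - ((t + t) + (Real.log (1 + E) + Real.log (1 + E))) := by
    unfold solU solPhi
    rw [hc, hd2, ← hEdef, ← htdef]
    push_cast; ring
  rw [e1, e2]
  have het : Real.exp t = |Γ| := Real.exp_log hΓabs
  have hE1' : (1:ℝ) + E ≠ 0 := ne_of_gt hE1
  simp only [Real.exp_sub, Real.exp_add, het, Real.exp_log hp1pos, Real.exp_log hr1pos,
    Real.exp_log hp2pos, Real.exp_log hr2pos, Real.exp_log hE1]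
  -- dispersion relation in rational form
  have hK : kx * ky = Γ ^ 2 * ((s1 - s1⁻¹) / 2) ^ 2 - (Γ ^ 2)⁻¹ * ((s2 - s2⁻¹) / 2) ^ 2 := by
    have hz : Γ ^ (-2:ℤ) = (Γ ^ 2)⁻¹ := by
      rw [zpow_neg, zpow_two, pow_two]
    rw [hdisp, hz, Real.sinh_eq, Real.sinh_eq, Real.exp_neg, Real.exp_neg, hs1def, hs2def]
  have hCg : 8 * C = Γ ^ 2 - (Γ ^ 2)⁻¹ := by
    rw [hCdef, hΓdef]; field_simp; ring
  rw [hK, hCg]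
  rcases abs_choice Γ with hG | hG <;> rw [hG] <;> field_simp <;> ring


end
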